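/- Let A0 and A1 be random variables taking values in [0,1] on a probability space, let α ∈ (0,1], and let W be an event of positive probability such that A0·A1 ≥ α holds everywhere on W. Then (1 − E[A0 | W]) + (1 − E[A1 | W]) ≤ (2 / (1 + √α)) · (1 − E[A0·A1 | W]). -/

import Mathlib

open MeasureTheory

/-- **Disadvantage decomposition bound (Claim on ε₀ + ε₁).**
Let `A0, A1` be `[0,1]`-valued random variables, `α ∈ (0,1]`, and `W` an event of positive
probability on which `A0·A1 ≥ α` holds everywhere.  Then
`(1 − E[A0 ∣ W]) + (1 − E[A1 ∣ W]) ≤ (2/(1+√α)) · (1 − E[A0·A1 ∣ W])`,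
where `E[X ∣ W] = (∫_W X dπ)/π(W)`. -/
theorem stmt9 {Ω : Type*} [MeasurableSpace Ω] (π : Measure Ω) [IsProbabilityMeasure π]
    (A0 A1 : Ω → ℝ) (hA0m : Measurable A0) (hA1m : Measurable A1)
    (hA0 : ∀ ω, A0 ω ∈ Set.Icc (0 : ℝ) 1) (hA1 : ∀ ω, A1 ω ∈ Set.Icc (0 : ℝ) 1)
    (α : ℝ) (hα : α ∈ Set.Ioc (0 : ℝ) 1)
    (W : Set Ω) (hWm : MeasurableSet W) (hW : π W ≠ 0)
    (hprod : ∀ ω ∈ W, α ≤ A0 ω * A1 ω) :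
    (1 - (∫ ω in W, A0 ω ∂π) / (π W).toReal) + (1 - (∫ ω in W, A1 ω ∂π) / (π W).toReal) ≤
      (2 / (1 + Real.sqrt α)) * (1 - (∫ ω in W, A0 ω * A1 ω ∂π) / (π W).toReal) := by
  set s := Real.sqrt α with hs_def
  have hs0 : 0 < s := Real.sqrt_pos.mpr hα.1
  have hs1 : s ≤ 1 := by
    rw [hs_def, show (1:ℝ) = Real.sqrt 1 by simp]
    exact Real.sqrt_le_sqrt hα.2
  set p := (π W).toReal with hp_def
  have hp0 : 0 < p := ENNReal.toReal_pos hW (measure_ne_top π W)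
  -- Integrability
  have hint : ∀ (f : Ω → ℝ), Measurable f → (∀ ω, |f ω| ≤ 1) →
      IntegrableOn f W π := by
    intro f hfm hfb
    exact (integrable_const (1:ℝ)).mono' hfm.aestronglyMeasurable.restrict
      (Filter.Eventually.of_forall hfb)
  have hb0 : ∀ ω, |A0 ω| ≤ 1 := fun ω => abs_le.mpr ⟨by linarith [(hA0 ω).1], (hA0 ω).2⟩
  have hb1 : ∀ ω, |A1 ω| ≤ 1 := fun ω => abs_le.mpr ⟨by linarith [(hA1 ω).1], (hA1 ω).2⟩
  have hi0 : IntegrableOn A0 W π := hint A0 hA0m hb0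
  have hi1 : IntegrableOn A1 W π := hint A1 hA1m hb1
  have hiP : IntegrableOn (fun ω => A0 ω * A1 ω) W π := by
    refine hint _ (hA0m.mul hA1m) fun ω => ?_
    rw [abs_mul]
    exact mul_le_one₀ (hb0 ω) (abs_nonneg _) (hb1 ω)
  -- Pointwise inequality on W
  have hpt : ∀ ω ∈ W, (2 / (1 + s)) * (A0 ω * A1 ω + s) ≤ A0 ω + A1 ω := by
    intro ω hω
    have h0 := (hA0 ω).1
    have h1 := (hA1 ω).1
    set z := A0 ω * A1 ω with hz_def
    have hzα : α ≤ z := hprod ω hω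
    have hz1 : z ≤ 1 := mul_le_one₀ (hA0 ω).2 h1 (hA1 ω).2
    have hsz : Real.sqrt z ≤ 1 := by
      rw [show (1:ℝ) = Real.sqrt 1 by simp]; exact Real.sqrt_le_sqrt hz1
    have hsz0 : s ≤ Real.sqrt z := Real.sqrt_le_sqrt hzα
    have hszz : Real.sqrt z * Real.sqrt z = z :=
      Real.mul_self_sqrt (le_trans hα.1.le hzα)
    -- 2√z ≥ 2(z+s)/(1+s)
    have key : 2 * (z + s) ≤ 2 * Real.sqrt z * (1 + s) := by nlinarith
    have amgm : 2 * Real.sqrt z ≤ A0 ω + A1 ω := by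
      have e : Real.sqrt z = Real.sqrt (A0 ω) * Real.sqrt (A1 ω) := Real.sqrt_mul h0 _
      have e0 : Real.sqrt (A0 ω) * Real.sqrt (A0 ω) = A0 ω := Real.mul_self_sqrt h0
      have e1 : Real.sqrt (A1 ω) * Real.sqrt (A1 ω) = A1 ω := Real.mul_self_sqrt h1
      nlinarith [sq_nonneg (Real.sqrt (A0 ω) - Real.sqrt (A1 ω))]
    rw [div_mul_eq_mul_div, div_le_iff₀ (by linarith)]
    nlinarith
  -- Integrate
  have hIntIneq : ∫ ω in W, (2 / (1 + s)) * (A0 ω * A1 ω + s) ∂π ≤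
      ∫ ω in W, (A0 ω + A1 ω) ∂π := by
    refine setIntegral_mono_on ((hiP.add (integrableOn_const (measure_ne_top π W))).const_mul _) (hi0.add hi1) hWm hpt
  rw [MeasureTheory.integral_const_mul, integral_add hiP (integrableOn_const (measure_ne_top π W)), integral_add hi0 hi1] at hIntIneq
  simp only [integral_const, MeasurableSet.univ, Measure.restrict_apply, Set.univ_inter, Measure.real,
    smul_eq_mul, mul_one] at hIntIneq
  set I0 := ∫ ω in W, A0 ω ∂π
  set I1 := ∫ ω in W, A1 ω ∂π
  set IP := ∫ ω in W, A0 ω * A1 ω ∂π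
  have hIntIneq' : (2 / (1 + s)) * (IP + s * p) ≤ I0 + I1 := by
    calc (2 / (1 + s)) * (IP + s * p) = 2 / (1 + s) * (IP + (π W).toReal • s) := by
          rw [smul_eq_mul, hp_def]; ring_nf
      _ ≤ I0 + I1 := hIntIneq
  have h1s : 0 < 1 + s := by linarith
  rw [div_mul_eq_mul_div, div_le_iff₀ h1s] at hIntIneq'
  rw [show (2:ℝ)/(1+s)*(1-IP/p) = (2*(p-IP))/((1+s)*p) by field_simp,
      show 1 - I0/p + (1 - I1/p) = (2*p - (I0+I1))/p by field_simp; ring,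
      div_le_div_iff₀ hp0 (by positivity)]
  nlinarith [mul_le_mul_of_nonneg_right hIntIneq' hp0.le]
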